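/- Let A : H → Set H be β-strongly monotone with β > 0, let B : H → H be monotone, let λ > 0, let u* ∈ Ω, and let w, v ∈ H satisfy w − λB(w) ∈ v + λA(v). Then ⟨w − u*, φ(w, v)⟩ ≥ ⟨w − v, φ(w, v)⟩ + λβ‖v − u*‖², where φ(w, v) = (w − v) − λ(B(w) − B(v)). -/
import Mathlib


open RealInnerProductSpace

/-- For a `β`-strongly monotone `A` and monotone `B`, a solution `u*` and a
forward–backward point `v` of `w`, one has
`⟨w - u*, φ(w, v)⟩ ≥ ⟨w - v, φ(w, v)⟩ + λβ‖v - u*‖²`. -/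
theorem phi_inner_strongly_monotone_bound
    {H : Type*} [NormedAddCommGroup H] [InnerProductSpace ℝ H] [CompleteSpace H]
    (A : H → Set H) (B : H → H) (β : ℝ) (hβ : 0 < β)
    (hAsmono : ∀ u v : H, ∀ a ∈ A u, ∀ b ∈ A v, β * ‖u - v‖ ^ 2 ≤ ⟪a - b, u - v⟫)
    (hBmono : ∀ u v : H, 0 ≤ ⟪B u - B v, u - v⟫)
    (lam : ℝ) (hlam : 0 < lam)
    (ustar : H) (hstar : -B ustar ∈ A ustar)
    (w v : H)
    (hfb : ∃ a ∈ A v, w - lam • B w = v + lam • a) :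
    ⟪w - v, (w - v) - lam • (B w - B v)⟫ + lam * β * ‖v - ustar‖ ^ 2 ≤
      ⟪w - ustar, (w - v) - lam • (B w - B v)⟫ := by
  obtain ⟨a, ha, heq⟩ := hfb
  have hphi : (w - v) - lam • (B w - B v) = lam • (a + B v) := by
    have : w - lam • B w - v = lam • a := by
      rw [heq]; abel
    calc (w - v) - lam • (B w - B v)
        = (w - lam • B w - v) + lam • B v := by
          rw [smul_sub]; abel
      _ = lam • a + lam • B v := by rw [this]
      _ = lam • (a + B v) := by rw [smul_add]
  have hA := hAsmono v ustar a ha (-B ustar) hstar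
  have hB := hBmono v ustar
  have hsum : β * ‖v - ustar‖ ^ 2 ≤ ⟪a + B v, v - ustar⟫ := by
    have : a + B v = (a - -B ustar) + (B v - B ustar) := by abel
    rw [this, inner_add_left]
    linarith
  have key : lam * β * ‖v - ustar‖ ^ 2 ≤ ⟪v - ustar, (w - v) - lam • (B w - B v)⟫ := by
    rw [hphi, real_inner_smul_right, real_inner_comm]
    have := mul_le_mul_of_nonneg_left hsum hlam.le
    linarith [this]
  have hsplit : ⟪w - ustar, (w - v) - lam • (B w - B v)⟫ =
      ⟪w - v, (w - v) - lam • (B w - B v)⟫ + ⟪v - ustar, (w - v) - lam • (B w - B v)⟫ := by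
    rw [← inner_add_left]
    congr 1
    abel
  linarith [key, hsplit.ge, hsplit.le]
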